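/- Let f : A → A be a continuous map of degree d with |d| > 1. If for every integer k ≥ 1 every lift of fᵏ has a fixed point, then f is complete: for every k ≥ 1, the map fᵏ has exactly |dᵏ − 1| Nielsen classes of fixed points. -/

import Mathlib

open Set Filter Topology

noncomputable section

/-- The open annulus `A = S¹ × (0,1)`. -/
abbrev Ann : Type := Circle × (Set.Ioo (0:ℝ) 1)

/-- The universal cover `Ã = ℝ × (0,1)`. -/
abbrev AnnTil : Type := ℝ × (Set.Ioo (0:ℝ) 1)

/-- The covering projection `π(x,y) = (exp(2πix), y)`. -/
def pr : AnnTil → Ann := fun z => (Circle.exp (2 * Real.pi * z.1), z.2)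

/-- Translation by an integer in the first coordinate: `z + k`. -/
def tr (z : AnnTil) (k : ℤ) : AnnTil := (z.1 + k, z.2)

/-- `F` is a lift of `f`. -/
def IsLift (f : Ann → Ann) (F : AnnTil → AnnTil) : Prop :=
  Continuous F ∧ pr ∘ F = f ∘ pr

/-- `f` has degree `d`: some lift satisfies `F(z+1) = F(z) + d`. -/
def HasDegree (f : Ann → Ann) (d : ℤ) : Prop :=
  ∃ F : AnnTil → AnnTil, IsLift f F ∧ ∀ z, F (tr z 1) = tr (F z) d

/-- A subset of the annulus is essential if it is not contained in any
connected, simply connected open subset. -/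
def IsEssential (K : Set Ann) : Prop :=
  ¬ ∃ U : Set Ann, IsOpen U ∧ IsConnected U ∧ SimplyConnectedSpace U ∧ K ⊆ U

/-- Nielsen equivalence of fixed points `p`, `q` of `g`: there is a path `γ`
from `p` to `q` homotopic (rel endpoints) to `g ∘ γ`. -/
def NielsenEquiv (g : Ann → Ann) (p q : Ann) : Prop :=
  ∃ (hg : Continuous g) (hp : g p = p) (hq : g q = q) (γ : Path p q),
    γ.Homotopic ((γ.map hg).cast hp.symm hq.symm)

/-- `g` has exactly `N` Nielsen classes of fixed points. -/
def HasExactlyNielsenClasses (g : Ann → Ann) (N : ℕ) : Prop :=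
  ∃ S : Finset Ann, S.card = N ∧ (∀ p ∈ S, g p = p) ∧
    (∀ p ∈ S, ∀ q ∈ S, p ≠ q → ¬ NielsenEquiv g p q) ∧
    (∀ p, g p = p → ∃ q ∈ S, NielsenEquiv g p q)

/-- `Fill K`: the union of `K` with the connected components of its
complement whose closure is compact. -/
def Fill (K : Set Ann) : Set Ann :=
  K ∪ {x | x ∈ Kᶜ ∧ IsCompact (closure (connectedComponentIn Kᶜ x))}

namespace NielsenAux
open Complex Real unitInterval

/-- the covering exponential -/
def ee (x : ℝ) : Circle := Circle.exp (2 * Real.pi * x)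

lemma continuous_ee : Continuous ee := Circle.exp.continuous.comp (by continuity)

lemma ee_add (x y : ℝ) : ee (x + y) = ee x * ee y := by
  unfold ee; rw [mul_add, Circle.exp_add]

lemma ee_eq_ee {x y : ℝ} : ee x = ee y ↔ ∃ m : ℤ, x = y + m := by
  unfold ee
  rw [Circle.exp_eq_exp]
  have hπ : (2 : ℝ) * π ≠ 0 := by positivity
  constructor
  · rintro ⟨m, hm⟩
    refine ⟨m, mul_left_cancel₀ hπ ?_⟩
    rw [hm]; ring
  · rintro ⟨m, hm⟩; exact ⟨m, by rw [hm]; ring⟩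

lemma ee_int (x : ℝ) (m : ℤ) : ee (x + m) = ee x := ee_eq_ee.mpr ⟨m, rfl⟩

/-- Uniqueness of lifts on preconnected spaces. -/
lemma lift_unique {X : Type*} [TopologicalSpace X] [PreconnectedSpace X]
    {Φ Ψ : X → ℝ} (hΦ : Continuous Φ) (hΨ : Continuous Ψ)
    (h : ∀ x, ee (Φ x) = ee (Ψ x)) {x₀ : X} (h₀ : Φ x₀ = Ψ x₀) :
    ∀ x, Φ x = Ψ x := by
  have key : ∀ x, ∃ m : ℤ, Φ x - Ψ x = m := by
    intro x
    obtain ⟨m, hm⟩ := ee_eq_ee.mp (h x)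
    exact ⟨m, by rw [hm]; ring⟩
  set g : X → ℝ := fun x => Φ x - Ψ x with hgdef
  have hgc : Continuous g := hΦ.sub hΨ
  have hU : {x | g x = 0} = g ⁻¹' (Ioo (-1) 1) := by
    ext x
    simp only [mem_setOf_eq, mem_preimage, mem_Ioo]
    constructor
    · intro hx; rw [hx]; norm_num
    · rintro ⟨h1, h2⟩
      obtain ⟨m, hm⟩ := key x
      have hm' : g x = (m:ℝ) := hm
      rw [hm'] at h1 h2 ⊢
      have hm1 : (-1 : ℤ) < m := by exact_mod_cast h1
      have hm2 : m < 1 := by exact_mod_cast h2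
      have : m = 0 := by omega
      rw [this]; norm_num
  have hclopen : IsClopen {x | g x = 0} := by
    constructor
    · exact isClosed_singleton.preimage hgc
    · rw [hU]; exact isOpen_Ioo.preimage hgc
  have hne : {x | g x = 0}.Nonempty := ⟨x₀, by simp [hgdef, sub_eq_zero, h₀]⟩
  have := hclopen.eq_univ hne
  intro x
  have hx : x ∈ {x | g x = 0} := this ▸ mem_univ x
  exact sub_eq_zero.mp hx

lemma slit_of_ne_neg_one {z : Circle} (h : (z : ℂ) ≠ -1) :
    (z : ℂ) ∈ Complex.slitPlane := by
  rw [Complex.mem_slitPlane_iff_arg]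
  refine ⟨fun harg => h ?_, z.coe_ne_zero⟩
  have h1 : Circle.exp (Complex.arg (z : ℂ)) = z := Circle.exp_arg z
  rw [harg] at h1
  rw [← h1, Circle.coe_exp]
  exact Complex.exp_pi_mul_I

lemma div_ne_neg_one {a b : Circle} (h : dist a b < 2) :
    ((a / b : Circle) : ℂ) ≠ -1 := by
  intro hab
  have hcoe : (a : ℂ) / (b : ℂ) = -1 := by
    rw [← hab]; norm_cast
  have ha : (a : ℂ) = -(b : ℂ) := by
    field_simp at hcoe
    linear_combination hcoe
  have : dist a b = dist (a : ℂ) (b : ℂ) := rfl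
  rw [this, ha, Complex.dist_eq] at h
  have : ‖-(b:ℂ) - b‖ = 2 := by
    have : -(b:ℂ) - b = -(2 * b) := by ring
    rw [this, norm_neg, norm_mul, Circle.norm_coe]
    simp
  linarith [h, this.ge]


section LiftSq

lemma lift_sq (H : I × I → Circle) (hH : Continuous H) (x₀ : ℝ)
    (h₀ : ee x₀ = H (0, 0)) :
    ∃ Φ : I × I → ℝ, Continuous Φ ∧ Φ (0, 0) = x₀ ∧ ∀ p, ee (Φ p) = H p := by
  have huc : UniformContinuous H := CompactSpace.uniformContinuous_of_continuous hH
  obtain ⟨δ, hδ, hdist⟩ := Metric.uniformContinuous_iff.mp huc 2 (by norm_num)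
  obtain ⟨n, hn⟩ := exists_nat_one_div_lt hδ
  set N : ℕ := n + 1 with hN
  have hNR : ((N : ℝ)) = (n : ℝ) + 1 := by push_cast [hN]; ring
  have hNpos : (0 : ℝ) < N := by rw [hNR]; positivity
  have hsclmem : ∀ j : ℕ, min ((j : ℝ) / N) 1 ∈ I :=
    fun j => ⟨le_min (by positivity) zero_le_one, min_le_right _ _⟩
  set sg : ℕ → I → I := fun j t =>
    ⟨min ((j : ℝ) / N) 1 * t, unitInterval.mul_mem (hsclmem j) t.2⟩ with hsg
  set c : ℕ → I × I → I × I := fun j p => (sg j p.1, sg j p.2) with hc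
  have hsgcont : ∀ j, Continuous (sg j) := by
    intro j
    apply Continuous.subtype_mk
    exact continuous_const.mul continuous_subtype_val
  have hccont : ∀ j, Continuous (c j) := fun j =>
    ((hsgcont j).comp continuous_fst).prodMk ((hsgcont j).comp continuous_snd)
  have hsg0 : ∀ j, sg j (0 : I) = 0 := by
    intro j; apply Subtype.ext; simp [hsg]
  have hc0 : ∀ p : I × I, c 0 p = p → True := fun _ _ => trivial
  have hc00 : ∀ j, c j ((0 : I), (0 : I)) = ((0 : I), (0 : I)) := by
    intro j; simp [hc, hsg0]
  have hczero : ∀ p, c 0 p = ((0 : I), (0 : I)) := by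
    intro p
    have : ∀ t : I, sg 0 t = 0 := by
      intro t; apply Subtype.ext; simp [hsg]
    simp [hc, this]
  have hcN : ∀ p, c N p = p := by
    intro p
    have : ∀ t : I, sg N t = t := by
      intro t; apply Subtype.ext
      have : ((N : ℝ)) / N = 1 := div_self (ne_of_gt hNpos)
      simp [hsg, this]
    simp [hc, this]
  -- distance estimate
  have hsgdist : ∀ j (t : I), dist (sg (j+1) t) (sg j t) ≤ 1 / N := by
    intro j t
    set a := min ((j : ℝ) / N) 1 with ha
    set b := min (((j + 1 : ℕ) : ℝ) / N) 1 with hb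
    have hab : a ≤ b := by
      apply min_le_min _ le_rfl
      gcongr
      push_cast; linarith
    have hba : b ≤ a + 1 / N := by
      have h1 : b ≤ min ((j : ℝ) / N + 1 / N) (1 + 1 / N) := by
        apply min_le_min
        · apply le_of_eq; push_cast; ring
        · have : (0:ℝ) ≤ 1 / N := by positivity
          linarith
      have h2 : min ((j : ℝ) / N + 1 / N) (1 + 1 / N) = a + 1 / N := by
        rw [ha]; exact min_add_add_right _ _ _
      linarith
    have ht0 : (0:ℝ) ≤ (t:ℝ) := t.2.1
    have ht1 : (t:ℝ) ≤ 1 := t.2.2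
    have : dist (sg (j+1) t) (sg j t) = |b * t - a * t| := by
      rw [Subtype.dist_eq, Real.dist_eq]
    rw [this, _root_.abs_of_nonneg (by nlinarith)]
    nlinarith
  have hstep : ∀ j (p : I × I), dist (c (j+1) p) (c j p) < δ := by
    intro j p
    have h1 := hsgdist j p.1
    have h2 := hsgdist j p.2
    have : dist (c (j+1) p) (c j p) = max (dist (sg (j+1) p.1) (sg j p.1)) (dist (sg (j+1) p.2) (sg j p.2)) := by
      rw [hc, Prod.dist_eq]
    rw [this]
    have hlt : 1 / (N:ℝ) < δ := by rw [hNR]; exact hn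
    exact lt_of_le_of_lt (max_le h1 h2) hlt
  have hslit : ∀ j (p : I × I),
      ((H (c (j+1) p) / H (c j p) : Circle) : ℂ) ∈ Complex.slitPlane := by
    intro j p
    exact slit_of_ne_neg_one (div_ne_neg_one (hdist (hstep j p)))
  set Φ : I × I → ℝ := fun p =>
    x₀ + (2 * π)⁻¹ * ∑ j ∈ Finset.range N,
      Complex.arg ((H (c (j+1) p) / H (c j p) : Circle) : ℂ) with hΦ
  have hterm : ∀ j, Continuous fun p : I × I =>
      Complex.arg ((H (c (j+1) p) / H (c j p) : Circle) : ℂ) := by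
    intro j
    rw [continuous_iff_continuousAt]
    intro p
    have hinner : Continuous fun p : I × I => ((H (c (j+1) p) / H (c j p) : Circle) : ℂ) :=
      continuous_subtype_val.comp ((hH.comp (hccont (j+1))).div' (hH.comp (hccont j)))
    exact ContinuousAt.comp (g := Complex.arg)
      (x := p) (Complex.continuousAt_arg (hslit j p)) hinner.continuousAt
  have hΦcont : Continuous Φ := by
    apply continuous_const.add
    exact continuous_const.mul (continuous_finset_sum _ fun j _ => hterm j)
  have hΦ00 : Φ ((0:I), (0:I)) = x₀ := by
    have : ∀ j ∈ Finset.range N,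
        Complex.arg ((H (c (j+1) ((0:I),(0:I))) / H (c j ((0:I),(0:I))) : Circle) : ℂ) = 0 := by
      intro j _
      rw [hc00, hc00, div_self']
      simp [Circle.coe_one, Complex.arg_one]
    have hsum : ∑ j ∈ Finset.range N,
        Complex.arg ((H (c (j+1) ((0:I),(0:I))) / H (c j ((0:I),(0:I))) : Circle) : ℂ) = 0 :=
      Finset.sum_eq_zero this
    have hrfl : Φ ((0:I), (0:I)) = x₀ + (2 * π)⁻¹ * ∑ j ∈ Finset.range N,
        Complex.arg ((H (c (j+1) ((0:I),(0:I))) / H (c j ((0:I),(0:I))) : Circle) : ℂ) := rfl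
    rw [hrfl, hsum]; ring
  have htel : ∀ (p : I × I) (k : ℕ),
      Circle.exp (∑ j ∈ Finset.range k,
        Complex.arg ((H (c (j+1) p) / H (c j p) : Circle) : ℂ)) = H (c k p) / H (c 0 p) := by
    intro p k
    induction k with
    | zero => simp [Circle.exp_zero, div_self']
    | succ k ih =>
        rw [Finset.sum_range_succ, Circle.exp_add, ih, Circle.exp_arg]
        exact div_mul_div_cancel' _ _ _
  refine ⟨Φ, hΦcont, hΦ00, ?_⟩
  intro p
  have hexpand : 2 * π * Φ p = 2 * π * x₀ + ∑ j ∈ Finset.range N,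
      Complex.arg ((H (c (j+1) p) / H (c j p) : Circle) : ℂ) := by
    rw [hΦ]
    have hπ : (2:ℝ) * π ≠ 0 := by positivity
    field_simp
  unfold ee
  rw [hexpand, Circle.exp_add, htel p N, hcN, hczero]
  have h2 : Circle.exp (2 * π * x₀) = H ((0:I), (0:I)) := h₀
  rw [h2]
  exact mul_div_cancel _ _

end LiftSq

lemma pr_def (z : AnnTil) : pr z = (ee z.1, z.2) := rfl

lemma continuous_pr : Continuous pr :=
  (continuous_ee.comp continuous_fst).prodMk continuous_snd

lemma tr_tr (z : AnnTil) (a b : ℤ) : tr (tr z a) b = tr z (a + b) := by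
  unfold tr; rw [Prod.ext_iff]
  refine ⟨?_, rfl⟩
  show z.1 + (a:ℝ) + (b:ℝ) = z.1 + ((a + b : ℤ) : ℝ)
  push_cast; ring

lemma tr_zero (z : AnnTil) : tr z 0 = z := by
  unfold tr; rw [Prod.ext_iff]
  refine ⟨?_, rfl⟩
  show z.1 + ((0:ℤ):ℝ) = z.1
  push_cast; ring

lemma tr_fst (z : AnnTil) (m : ℤ) : (tr z m).1 = z.1 + m := rfl
lemma tr_snd (z : AnnTil) (m : ℤ) : (tr z m).2 = z.2 := rfl

lemma tr_inj {z w : AnnTil} {m : ℤ} (h : tr z m = tr w m) : z = w := by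
  have := congrArg (fun u => tr u (-m)) h
  simpa [tr_tr, tr_zero] using this

lemma pr_tr (z : AnnTil) (m : ℤ) : pr (tr z m) = pr z := by
  rw [pr_def, pr_def, tr_fst, tr_snd, ee_int]

lemma pr_eq_iff {w z : AnnTil} : pr w = pr z ↔ ∃ m : ℤ, w = tr z m := by
  constructor
  · intro h
    rw [pr_def, pr_def, Prod.ext_iff] at h
    obtain ⟨m, hm⟩ := ee_eq_ee.mp h.1
    exact ⟨m, Prod.ext hm h.2⟩
  · rintro ⟨m, rfl⟩; exact pr_tr z m

lemma pr_surj (p : Ann) : ∃ z : AnnTil, pr z = p := by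
  refine ⟨(Complex.arg (p.1 : ℂ) / (2 * π), p.2), ?_⟩
  rw [pr_def]
  have hπ : (2 : ℝ) * π ≠ 0 := by positivity
  have : ee (Complex.arg (p.1 : ℂ) / (2 * π)) = p.1 := by
    unfold ee
    have h1 : 2 * π * (Complex.arg (p.1 : ℂ) / (2 * π)) = Complex.arg (p.1 : ℂ) := by
      field_simp
    rw [h1, Circle.exp_arg]
  rw [this]

section IterLift
variable {f : Ann → Ann} {F : AnnTil → AnnTil} {d : ℤ}

lemma lift_tr_int (hl : ∀ z, pr (F z) = f (pr z))
    (h1 : ∀ z, F (tr z 1) = tr (F z) d) :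
    ∀ (m : ℤ) (z : AnnTil), F (tr z m) = tr (F z) (m * d) := by
  intro m
  induction m using Int.induction_on with
  | zero => intro z; simp [tr_zero]
  | succ m ih =>
      intro z
      have : tr z ((m : ℤ) + 1) = tr (tr z m) 1 := (tr_tr z m 1).symm
      rw [this, h1, ih, tr_tr]
      congr 1; ring
  | pred m ih =>
      intro z
      have key : F (tr z (-(m:ℤ))) = tr (F (tr z (-(m:ℤ) - 1))) d := by
        have : tr (tr z (-(m:ℤ) - 1)) 1 = tr z (-(m:ℤ)) := by
          rw [tr_tr]; congr 1; ring
        rw [← this, h1]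
      have h2 : tr (F (tr z (-(m:ℤ) - 1))) d = tr (F z) (-(m:ℤ) * d) := by
        rw [← key, ih z]
      have h3 : F (tr z (-(m:ℤ) - 1)) = tr (tr (F z) (-(m:ℤ) * d)) (-d) := by
        apply tr_inj (m := d)
        rw [h2, tr_tr, tr_tr]
        congr 1; ring
      rw [h3, tr_tr]
      congr 1; ring

lemma iter_pr (hl : ∀ z, pr (F z) = f (pr z)) :
    ∀ (k : ℕ) (z : AnnTil), pr (F^[k] z) = f^[k] (pr z) := by
  intro k
  induction k with
  | zero => intro z; simp
  | succ k ih =>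
      intro z
      rw [Function.iterate_succ_apply', Function.iterate_succ_apply', hl, ih]

lemma iter_tr (hl : ∀ z, pr (F z) = f (pr z))
    (h1 : ∀ z, F (tr z 1) = tr (F z) d) :
    ∀ (k : ℕ) (z : AnnTil) (m : ℤ), F^[k] (tr z m) = tr (F^[k] z) (m * d ^ k) := by
  intro k
  induction k with
  | zero => intro z m; simp
  | succ k ih =>
      intro z m
      rw [Function.iterate_succ_apply', ih, lift_tr_int hl h1, Function.iterate_succ_apply',
        pow_succ]
      congr 1; ring

end IterLift
section Seg

lemma ioo_convex {a b : ℝ} (ha : a ∈ Ioo (0:ℝ) 1) (hb : b ∈ Ioo (0:ℝ) 1)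
    {t : ℝ} (h0 : 0 ≤ t) (h1 : t ≤ 1) : (1 - t) * a + t * b ∈ Ioo (0:ℝ) 1 := by
  have := (convex_Ioo (0:ℝ) 1) ha hb (a := 1 - t) (b := t) (by linarith) h0 (by ring)
  simpa [smul_eq_mul] using this

/-- straight-line segment in the universal cover -/
def seg (w w' : AnnTil) (t : I) : AnnTil :=
  ((1 - (t:ℝ)) * w.1 + (t:ℝ) * w'.1,
   ⟨(1 - (t:ℝ)) * w.2.1 + (t:ℝ) * w'.2.1, ioo_convex w.2.2 w'.2.2 t.2.1 t.2.2⟩)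

lemma continuous_seg₂ {X : Type*} [TopologicalSpace X] {u v : X → AnnTil}
    (hu : Continuous u) (hv : Continuous v) {τ : X → I} (hτ : Continuous τ) :
    Continuous fun x => seg (u x) (v x) (τ x) := by
  have hτ' : Continuous fun x => ((τ x : ℝ)) := continuous_subtype_val.comp hτ
  have hu1 : Continuous fun x => (u x).1 := continuous_fst.comp hu
  have hv1 : Continuous fun x => (v x).1 := continuous_fst.comp hv
  have hu2 : Continuous fun x => ((u x).2 : ℝ) :=
    continuous_subtype_val.comp (continuous_snd.comp hu)
  have hv2 : Continuous fun x => ((v x).2 : ℝ) :=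
    continuous_subtype_val.comp (continuous_snd.comp hv)
  apply Continuous.prodMk
  · exact ((continuous_const.sub hτ').mul hu1).add (hτ'.mul hv1)
  · exact Continuous.subtype_mk (((continuous_const.sub hτ').mul hu2).add (hτ'.mul hv2)) _

lemma seg_zero (w w' : AnnTil) : seg w w' 0 = w := by
  unfold seg
  rw [Prod.ext_iff]
  refine ⟨by simp, Subtype.ext (by simp)⟩

lemma seg_one (w w' : AnnTil) : seg w w' 1 = w' := by
  unfold seg
  rw [Prod.ext_iff]
  refine ⟨by simp, Subtype.ext (by simp)⟩

lemma seg_self (w : AnnTil) (t : I) : seg w w t = w := by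
  unfold seg
  rw [Prod.ext_iff]
  refine ⟨by ring, Subtype.ext (by simp; ring)⟩

end Seg
lemma nielsenEquiv_of_common_lift {g : Ann → Ann} (hg : Continuous g)
    {F' : AnnTil → AnnTil} (hF'c : Continuous F') (hF'l : ∀ z, pr (F' z) = g (pr z))
    {w w' : AnnTil} (hw : F' w = w) (hw' : F' w' = w') :
    NielsenEquiv g (pr w) (pr w') := by
  have hp : g (pr w) = pr w := by rw [← hF'l, hw]
  have hq : g (pr w') = pr w' := by rw [← hF'l, hw']
  have hγc : Continuous fun t : I => pr (seg w w' t) :=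
    continuous_pr.comp (continuous_seg₂ continuous_const continuous_const continuous_id)
  set γ : Path (pr w) (pr w') :=
    { toFun := fun t => pr (seg w w' t)
      continuous_toFun := hγc
      source' := by show pr (seg w w' 0) = pr w; rw [seg_zero]
      target' := by show pr (seg w w' 1) = pr w'; rw [seg_one] } with hγdef
  refine ⟨hg, hp, hq, γ, ⟨?_⟩⟩
  have hKc : Continuous fun p : I × I =>
      pr (seg (seg w w' p.2) (F' (seg w w' p.2)) p.1) := by
    apply continuous_pr.comp
    apply continuous_seg₂
    · exact continuous_seg₂ continuous_const continuous_const continuous_snd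
    · exact hF'c.comp (continuous_seg₂ continuous_const continuous_const continuous_snd)
    · exact continuous_fst
  exact
    { toFun := fun p => pr (seg (seg w w' p.2) (F' (seg w w' p.2)) p.1)
      continuous_toFun := hKc
      map_zero_left := by
        intro t
        simp only [ContinuousMap.coe_mk, seg_zero]
        rfl
      map_one_left := by
        intro t
        show pr (seg (seg w w' t) (F' (seg w w' t)) 1) = ((γ.map hg).cast hp.symm hq.symm) t
        rw [seg_one, hF'l, Path.cast_coe, Path.map_coe]
        rfl
      prop' := by
        intro s t ht
        simp only [Set.mem_singleton_iff, Set.mem_insert_iff] at ht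
        rcases ht with rfl | rfl
        · simp only [ContinuousMap.coe_mk, seg_zero, hw, seg_self]
          exact γ.source.symm
        · simp only [ContinuousMap.coe_mk, seg_one, hw', seg_self]
          exact γ.target.symm }

lemma dvd_of_nielsen {g : Ann → Ann} {G : AnnTil → AnnTil} (hGc : Continuous G)
    (hGl : ∀ z, pr (G z) = g (pr z)) {dk : ℤ}
    (hGtr : ∀ (z : AnnTil) (m : ℤ), G (tr z m) = tr (G z) (m * dk))
    {i j : ℤ} {zi zj : AnnTil}
    (hzi : tr (G zi) i = zi) (hzj : tr (G zj) j = zj)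
    (hN : NielsenEquiv g (pr zi) (pr zj)) : (dk - 1) ∣ (i - j) := by
  obtain ⟨hg, hp, hq, γ, ⟨Hmt⟩⟩ := hN
  have hγc : Continuous fun t : I => ((γ t).1 : Circle) := continuous_fst.comp γ.continuous
  have h00 : ee zi.1 = (γ (0 : I)).1 := by rw [γ.source]; rfl
  obtain ⟨A, hAc, hA0, hAe⟩ := lift_sq (fun p => (γ p.2).1)
      (hγc.comp continuous_snd) zi.1 h00
  set a : I → ℝ := fun t => A (0, t) with hadef
  have hac : Continuous a := hAc.comp (continuous_const.prodMk continuous_id)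
  have ha0 : a 0 = zi.1 := hA0
  have hae : ∀ t, ee (a t) = (γ t).1 := fun t => hAe (0, t)
  set gt : I → AnnTil := fun t => (a t, (γ t).2) with hgtdef
  have hgtc : Continuous gt := hac.prodMk (continuous_snd.comp γ.continuous)
  have hprgt : ∀ t, pr (gt t) = γ t := by
    intro t; rw [pr_def]; exact Prod.ext (hae t) rfl
  have hHc : Continuous fun p : I × I => ((Hmt p).1 : Circle) :=
    continuous_fst.comp Hmt.continuous
  have hH00 : ee zi.1 = (Hmt ((0 : I), (0 : I))).1 := by
    rw [Hmt.apply_zero]; exact h00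
  obtain ⟨B, hBc, hB0, hBe⟩ := lift_sq (fun p => (Hmt p).1) hHc zi.1 hH00
  -- bottom edge of the lifted homotopy agrees with the lifted path
  have hu1 : ∀ t, B (0, t) = a t := by
    apply lift_unique (hBc.comp (continuous_const.prodMk continuous_id)) hac
    · intro t
      show ee (B (0, t)) = ee (a t)
      rw [hBe (0, t), hae t, Hmt.apply_zero]
      rfl
    · show B (0, 0) = a 0
      rw [hB0, ha0]
  -- left edge is constant
  have hu2 : ∀ s : I, B (s, 0) = zi.1 := by
    apply lift_unique (hBc.comp (continuous_id.prodMk continuous_const)) continuous_const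
    · intro s
      show ee (B (s, 0)) = ee zi.1
      rw [hBe (s, 0), Hmt.eq_fst s (Set.mem_insert _ _)]
      exact h00.symm
    · show B (0, 0) = zi.1
      exact hB0
  -- right edge is constant
  have hu3 : ∀ s : I, B (s, 1) = a 1 := by
    apply lift_unique (hBc.comp (continuous_id.prodMk continuous_const)) continuous_const
    · intro s
      show ee (B (s, 1)) = ee (a 1)
      rw [hBe (s, 1), hae 1, Hmt.eq_fst s (Set.mem_insert_iff.mpr (Or.inr rfl))]
      rfl
    · show B (0, 1) = a 1
      exact hu1 1
  -- top edge versus the image of the lifted path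
  have hu4 : ∀ t, B (1, t) = (G (gt t)).1 + i := by
    apply lift_unique (hBc.comp (continuous_const.prodMk continuous_id))
      ((continuous_fst.comp (hGc.comp hgtc)).add continuous_const)
    · intro t
      show ee (B (1, t)) = ee ((G (gt t)).1 + i)
      rw [hBe (1, t), ee_int, Hmt.apply_one]
      have h2 : ee ((G (gt t)).1) = (pr (G (gt t))).1 := rfl
      rw [h2, hGl, hprgt]
      show (((γ.map hg).cast hp.symm hq.symm) t).1 = (g (γ t)).1
      rw [Path.cast_coe, Path.map_coe]
      rfl
    · show B (1, 0) = (G (gt 0)).1 + i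
      rw [hu2 1]
      have hgt0 : gt 0 = zi := by
        apply Prod.ext
        · exact ha0
        · show (γ 0).2 = zi.2
          rw [γ.source]; rfl
      rw [hgt0]
      have := congrArg Prod.fst hzi
      rw [tr_fst] at this
      linarith [this]
  -- endpoint of the lifted path lies over zj
  obtain ⟨m, hm⟩ : ∃ m : ℤ, gt 1 = tr zj m := by
    apply pr_eq_iff.mp
    rw [hprgt 1, γ.target]
  -- collect the equalities
  have e1 : B (1, 1) = a 1 := hu3 1
  have e2 : B (1, 1) = (G (gt 1)).1 + i := hu4 1
  have e3 : a 1 = zj.1 + m := by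
    have := congrArg Prod.fst hm
    rw [tr_fst] at this
    exact this
  have e4 : ((G zj).1 : ℝ) = zj.1 - j := by
    have := congrArg Prod.fst hzj
    rw [tr_fst] at this
    linarith [this]
  have e5 : ((G (gt 1)).1 : ℝ) = zj.1 - j + m * dk := by
    rw [hm, hGtr zj m, tr_fst, e4]
    push_cast
    ring
  have key : (i : ℝ) - j = m * (1 - dk) := by
    rw [e1, e3] at e2
    rw [e5] at e2
    push_cast at e2 ⊢
    linarith [e2]
  have keyz : (i : ℤ) - j = m * (1 - dk) := by exact_mod_cast key
  exact ⟨-m, by linarith [keyz]⟩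

lemma nielsen_refl {g : Ann → Ann} (hg : Continuous g) {q : Ann} (hq : g q = q) :
    NielsenEquiv g q q := by
  refine ⟨hg, hq, hq, Path.refl q, ?_⟩
  have : ((Path.refl q).map hg).cast hq.symm hq.symm = Path.refl q := by
    apply Path.ext
    funext t
    rw [Path.cast_coe, Path.map_coe]
    simp [hq]
  rw [this]

end NielsenAux

open NielsenAux in
/-- If for every `k ≥ 1` every lift of `fᵏ` has a fixed point, then `f` is
complete. -/
theorem stmt_9 (f : Ann → Ann) (hf : Continuous f) (d : ℤ)
    (hdeg : HasDegree f d) (hd : 1 < |d|)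
    (hfix : ∀ k : ℕ, 1 ≤ k →
      ∀ F : AnnTil → AnnTil, IsLift (f^[k]) F → ∃ z : AnnTil, F z = z) :
    ∀ k : ℕ, 1 ≤ k →
      HasExactlyNielsenClasses (f^[k]) (d ^ k - 1).natAbs := by
  classical
  obtain ⟨F, ⟨hFc, hFl⟩, hF1⟩ := hdeg
  have hFl' : ∀ z, pr (F z) = f (pr z) := fun z => congrFun hFl z
  intro k hk
  have hgc : Continuous (f^[k]) := hf.iterate k
  set G : AnnTil → AnnTil := F^[k] with hGdef
  have hGc : Continuous G := hFc.iterate k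
  have hGl : ∀ z, pr (G z) = f^[k] (pr z) := iter_pr hFl' k
  have hGtr : ∀ (z : AnnTil) (m : ℤ), G (tr z m) = tr (G z) (m * d ^ k) :=
    fun z m => iter_tr hFl' hF1 k z m
  set D : ℤ := d ^ k - 1 with hDdef
  have hdk : 1 < |d ^ k| := by
    rw [abs_pow]
    exact one_lt_pow₀ hd (by omega)
  have hD0 : D ≠ 0 := by
    intro h
    have h1 : d ^ k = 1 := by omega
    rw [h1] at hdk
    norm_num at hdk
  set N : ℕ := D.natAbs with hNdef
  have hNpos : 0 < N := Int.natAbs_pos.mpr hD0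
  have hND : (N : ℤ) = |D| := (Int.abs_eq_natAbs D).symm
  -- the family of lifts and their fixed points
  have hliftc : ∀ j : ℤ, Continuous (fun z => tr (G z) j) := by
    intro j
    show Continuous fun z => (((G z).1 + (j:ℝ), (G z).2) : AnnTil)
    exact ((continuous_fst.comp hGc).add continuous_const).prodMk (continuous_snd.comp hGc)
  have hliftl : ∀ (j : ℤ) (z : AnnTil), pr (tr (G z) j) = f^[k] (pr z) := by
    intro j z
    rw [pr_tr, hGl]
  have hlift : ∀ j : ℤ, IsLift (f^[k]) (fun z => tr (G z) j) := by
    intro j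
    exact ⟨hliftc j, funext fun z => hliftl j z⟩
  choose Z hZ using fun j : ℤ => hfix k hk _ (hlift j)
  have hZ' : ∀ j : ℤ, tr (G (Z j)) j = Z j := hZ
  set p : ℤ → Ann := fun j => pr (Z j) with hpdef
  have hfixp : ∀ j : ℤ, f^[k] (p j) = p j := by
    intro j
    have := congrArg pr (hZ' j)
    rw [pr_tr, hGl] at this
    exact this
  have hkey : ∀ i j : ℤ, NielsenEquiv (f^[k]) (p i) (p j) → D ∣ (i - j) :=
    fun i j h => dvd_of_nielsen hGc hGl hGtr (hZ' i) (hZ' j) h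
  have hsmall : ∀ i j : ℤ, |i - j| < (N : ℤ) → D ∣ (i - j) → i = j := by
    intro i j h1 h2
    have hd1 : (N : ℤ) ∣ (i - j) := by
      rw [hND]
      exact (abs_dvd _ _).mpr h2
    have := Int.eq_zero_of_abs_lt_dvd hd1 h1
    omega
  have hinj : Set.InjOn (fun jn : ℕ => p (jn : ℤ)) ↑(Finset.range N) := by
    intro i hi j hj hpe
    simp only [Finset.coe_range, Set.mem_Iio] at hi hj
    have hpe' : p (i : ℤ) = p (j : ℤ) := hpe
    have hNe : NielsenEquiv (f^[k]) (p i) (p j) := by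
      rw [hpe']
      exact nielsen_refl hgc (hfixp j)
    have hdvd := hkey i j hNe
    have habs : |(i : ℤ) - j| < (N : ℤ) := abs_lt.mpr ⟨by omega, by omega⟩
    exact_mod_cast hsmall i j habs hdvd
  refine ⟨(Finset.range N).image (fun jn : ℕ => p (jn : ℤ)), ?_, ?_, ?_, ?_⟩
  · rw [Finset.card_image_of_injOn hinj, Finset.card_range]
  · intro q hq
    obtain ⟨jn, _, rfl⟩ := Finset.mem_image.mp hq
    exact hfixp jn
  · intro q1 hq1 q2 hq2 hne hNe
    obtain ⟨i, hi, rfl⟩ := Finset.mem_image.mp hq1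
    obtain ⟨j, hj, rfl⟩ := Finset.mem_image.mp hq2
    rw [Finset.mem_range] at hi hj
    have hdvd := hkey i j hNe
    have habs : |(i : ℤ) - j| < (N : ℤ) := abs_lt.mpr ⟨by omega, by omega⟩
    have := hsmall i j habs hdvd
    exact hne (by rw [show (i : ℤ) = (j : ℤ) from this])
  · intro q hqfix
    obtain ⟨z₀, hz₀⟩ := pr_surj q
    have hper : pr (G z₀) = pr z₀ := by
      rw [hGl, hz₀, hqfix]
    obtain ⟨m, hmz⟩ := pr_eq_iff.mp hper
    set r : ℤ := (-m) % (N : ℤ) with hrdef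
    have hNz : ((N : ℤ)) ≠ 0 := by exact_mod_cast hNpos.ne'
    have hr0 : 0 ≤ r := Int.emod_nonneg _ hNz
    have hrN : r < (N : ℤ) := Int.emod_lt_of_pos _ (by exact_mod_cast hNpos)
    have hdvdN : (N : ℤ) ∣ (-m - r) := by
      rw [hrdef, Int.emod_def]
      exact ⟨(-m) / (N : ℤ), by ring⟩
    have hDdvd : D ∣ (-m - r) := dvd_trans (Int.dvd_natAbs.mpr dvd_rfl) hdvdN
    obtain ⟨n0, hn0⟩ := hDdvd
    rw [hDdef] at hn0
    set z' : AnnTil := tr z₀ n0 with hz'def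
    have hfixz' : tr (G z') r = z' := by
      rw [hz'def, hGtr z₀ n0, hmz, tr_tr, tr_tr]
      congr 1
      linear_combination (-1 : ℤ) * hn0
    have hprz' : pr z' = q := by
      rw [hz'def, pr_tr, hz₀]
    have hNeq : NielsenEquiv (f^[k]) (pr z') (pr (Z r)) :=
      nielsenEquiv_of_common_lift hgc (hliftc r) (hliftl r) hfixz' (hZ' r)
    refine ⟨p r, ?_, ?_⟩
    · apply Finset.mem_image.mpr
      refine ⟨r.toNat, Finset.mem_range.mpr (by omega), ?_⟩
      have hrt : ((r.toNat : ℤ)) = r := Int.toNat_of_nonneg hr0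
      rw [hrt]
    · rw [← hprz']
      exact hNeq
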